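/- For every real s > 0 the series T_L(s) := Σ_{k=0}^{∞} (k+1)·[ (Σ_{l=0}^{k+1} q^{2nl})·(k+3/2)^{−2−s} + (Σ_{l=0}^{k−1} q^{2nl})·(k+1/2)^{−2−s} ] and T_M(s) := Σ_{k=0}^{∞} (Σ_{m=0}^{k} q^{2nm})·[ (k+2)·(k+3/2)^{−2−s} + k·(k+1/2)^{−2−s} ] converge, and lim_{s→0⁺} s·T_L(s) = lim_{s→0⁺} s·T_M(s) = 2/(1 − q^{2n}). (T_L(s) and T_M(s) are the traces Tr(L_q^n |D|^{−2−s}) and Tr(M_q^n |D|^{−2−s}) of the n-th powers of the diagonal operators L_q v^{j,s}_{m,l} = q^{2l} v^{j,s}_{m,l} and M_q v^{j,s}_{m,l} = q^{2m} v^{j,s}_{m,l} on the Hilbert space of the SU_q(2) spectral triple, so these limits compute the noncommutative integrals ∮ L_q^n |D|^{−2} = ∮ M_q^n |D|^{−2} = 2/(1 − q^{2n}).) -/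

import Mathlib

noncomputable section

/-- `Tr(L_q^n |D|^(-2-s))` for the diagonal operator `L_q v^{j,s}_{m,l} = q^(2l) v^{j,s}_{m,l}`
of the `SU_q(2)` spectral triple. -/
def traceLq (q : ℝ) (n : ℕ) (s : ℝ) : ℝ :=
  ∑' k : ℕ, ((k : ℝ) + 1) *
    ((∑ l ∈ Finset.range (k + 2), q ^ (2 * n * l)) * ((k : ℝ) + 3 / 2) ^ (-(2 + s))
      + (∑ l ∈ Finset.range k, q ^ (2 * n * l)) * ((k : ℝ) + 1 / 2) ^ (-(2 + s)))

/-- `Tr(M_q^n |D|^(-2-s))` for the diagonal operator `M_q v^{j,s}_{m,l} = q^(2m) v^{j,s}_{m,l}`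
of the `SU_q(2)` spectral triple. -/
def traceMq (q : ℝ) (n : ℕ) (s : ℝ) : ℝ :=
  ∑' k : ℕ, (∑ m ∈ Finset.range (k + 1), q ^ (2 * n * m)) *
    (((k : ℝ) + 2) * ((k : ℝ) + 3 / 2) ^ (-(2 + s))
      + (k : ℝ) * ((k : ℝ) + 1 / 2) ^ (-(2 + s)))

open Filter Set


lemma zf_anti {s : ℝ} (hs : 0 < s) {A B : ℝ} (hA : 0 < A) :
    AntitoneOn (fun x : ℝ => x ^ (-(1+s))) (Set.Icc A B) := by
  intro x hx y hy hxy
  exact Real.rpow_le_rpow_of_nonpos (lt_of_lt_of_le hA hx.1) hxy (by linarith)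

lemma zint (a s : ℝ) (ha : 0 < a) (hs : 0 < s) (N : ℕ) :
    ∫ x in a..(a + N), x ^ (-(1+s)) = (a ^ (-s) - (a + N) ^ (-s)) / s := by
  rw [integral_rpow]
  · have h1 : -(1+s) + 1 = -s := by ring
    rw [h1, div_eq_div_iff (by linarith) (ne_of_gt hs)]
    ring
  · right
    refine ⟨fun h => (ne_of_gt hs) (by linarith), ?_⟩
    intro h
    rw [Set.mem_uIcc] at h
    have hN : (0:ℝ) ≤ (N:ℝ) := Nat.cast_nonneg N
    rcases h with h | h
    · linarith [h.1]
    · linarith [h.1]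

lemma zkey (a s : ℝ) (ha : 0 < a) (hs : 0 < s) :
    Summable (fun k : ℕ => ((k:ℝ)+a) ^ (-(1+s))) ∧
    a ^ (-s) / s ≤ (∑' k : ℕ, ((k:ℝ)+a) ^ (-(1+s))) ∧
    (∑' k : ℕ, ((k:ℝ)+a) ^ (-(1+s))) ≤ a ^ (-(1+s)) + a ^ (-s) / s := by
  have hnn : ∀ k : ℕ, 0 ≤ ((k:ℝ)+a) ^ (-(1+s)) := fun k => by positivity
  -- upper bound on partial sums
  have hub : ∀ N : ℕ, ∑ k ∈ Finset.range N, ((k:ℝ)+a) ^ (-(1+s)) ≤ a ^ (-(1+s)) + a ^ (-s) / s := by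
    intro N
    cases N with
    | zero => simp; positivity
    | succ m =>
      rw [Finset.sum_range_succ']
      have key : ∑ i ∈ Finset.range m, (fun x : ℝ => x ^ (-(1+s))) (a + ((i:ℕ) + 1 : ℕ))
          ≤ ∫ x in a..(a + m), x ^ (-(1+s)) :=
        AntitoneOn.sum_le_integral (zf_anti hs ha)
      rw [zint a s ha hs m] at key
      have hsum_eq : ∑ i ∈ Finset.range m, (((i+1:ℕ):ℝ) + a) ^ (-(1+s))
          = ∑ i ∈ Finset.range m, (fun x : ℝ => x ^ (-(1+s))) (a + ((i:ℕ) + 1 : ℕ)) := by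
        refine Finset.sum_congr rfl fun i _ => ?_
        show (((i+1:ℕ):ℝ) + a) ^ (-(1+s)) = (a + ((i+1:ℕ):ℝ)) ^ (-(1+s))
        rw [add_comm]
      have h3 : (a ^ (-s) - (a + m) ^ (-s)) / s ≤ a ^ (-s) / s := by
        have hmn : (0:ℝ) ≤ (a + m) ^ (-s) := by positivity
        exact (div_le_div_iff_of_pos_right hs).mpr (by linarith)
      have h0 : (((0:ℕ):ℝ) + a) ^ (-(1+s)) = a ^ (-(1+s)) := by norm_num
      rw [hsum_eq, h0]
      linarith [key, h3]
  have hsummable : Summable (fun k : ℕ => ((k:ℝ)+a) ^ (-(1+s))) :=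
    summable_of_sum_range_le hnn hub
  refine ⟨hsummable, ?_, Summable.tsum_le_of_sum_range_le hsummable hub⟩
  -- lower bound
  have hlow : ∀ N : ℕ, (a ^ (-s) - (a + N) ^ (-s)) / s ≤ ∑' k : ℕ, ((k:ℝ)+a) ^ (-(1+s)) := by
    intro N
    have key : ∫ x in a..(a + N), (fun x : ℝ => x ^ (-(1+s))) x
        ≤ ∑ i ∈ Finset.range N, (fun x : ℝ => x ^ (-(1+s))) (a + i) :=
      AntitoneOn.integral_le_sum (zf_anti hs ha)
    rw [zint a s ha hs N] at key
    have hsum_eq : ∑ i ∈ Finset.range N, (fun x : ℝ => x ^ (-(1+s))) (a + i)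
        = ∑ i ∈ Finset.range N, ((i:ℝ) + a) ^ (-(1+s)) := by
      refine Finset.sum_congr rfl fun i _ => ?_
      show (a + (i:ℝ)) ^ (-(1+s)) = ((i:ℝ) + a) ^ (-(1+s))
      rw [add_comm]
    rw [hsum_eq] at key
    exact key.trans (Summable.sum_le_tsum _ (fun i _ => hnn i) hsummable)
  have hlim : Tendsto (fun N : ℕ => (a ^ (-s) - (a + N) ^ (-s)) / s) atTop (nhds (a ^ (-s) / s)) := by
    have h1 : Tendsto (fun N : ℕ => (a + N : ℝ)) atTop atTop :=
      tendsto_atTop_add_const_left _ a tendsto_natCast_atTop_atTop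
    have h2 : Tendsto (fun N : ℕ => (a + N : ℝ) ^ (-s)) atTop (nhds 0) :=
      (tendsto_rpow_neg_atTop hs).comp h1
    have h3 : Tendsto (fun N : ℕ => (a ^ (-s) - (a + N : ℝ) ^ (-s)) / s) atTop
        (nhds ((a ^ (-s) - 0) / s)) := ((tendsto_const_nhds (x := a ^ (-s))).sub h2).div_const s
    simpa using h3
  exact le_of_tendsto hlim (Filter.Eventually.of_forall hlow)

lemma ztendsto (a : ℝ) (ha : 0 < a) :
    Tendsto (fun s : ℝ => s * ∑' k : ℕ, ((k:ℝ)+a) ^ (-(1+s))) (nhdsWithin 0 (Set.Ioi 0)) (nhds 1) := by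
  have hlo : Tendsto (fun s : ℝ => a ^ (-s)) (nhdsWithin 0 (Set.Ioi 0)) (nhds 1) := by
    have hc : ContinuousAt (fun s : ℝ => a ^ (-s)) 0 :=
      (Real.continuousAt_const_rpow (ne_of_gt ha)).comp (continuousAt_id.neg)
    have h2 : Filter.Tendsto (fun s : ℝ => a ^ (-s)) (nhdsWithin 0 (Set.Ioi 0)) (nhds (a ^ (-(0:ℝ)))) :=
      hc.continuousWithinAt
    simpa using h2
  have hhi : Tendsto (fun s : ℝ => a ^ (-s) + s * a ^ (-(1+s))) (nhdsWithin 0 (Set.Ioi 0)) (nhds 1) := by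
    have hc : ContinuousAt (fun s : ℝ => a ^ (-s) + s * a ^ (-(1+s))) 0 := by
      apply ContinuousAt.add
      · exact (Real.continuousAt_const_rpow (ne_of_gt ha)).comp (continuousAt_id.neg)
      · exact continuousAt_id.mul ((Real.continuousAt_const_rpow (ne_of_gt ha)).comp
          (by fun_prop))
    have h2 : Filter.Tendsto (fun s : ℝ => a ^ (-s) + s * a ^ (-(1+s))) (nhdsWithin 0 (Set.Ioi 0))
        (nhds (a ^ (-(0:ℝ)) + 0 * a ^ (-(1+(0:ℝ))))) := hc.continuousWithinAt
    simpa using h2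
  refine tendsto_of_tendsto_of_tendsto_of_le_of_le' hlo hhi ?_ ?_
  · filter_upwards [self_mem_nhdsWithin] with s hs
    have hs : 0 < s := hs
    have := (zkey a s ha hs).2.1
    calc a ^ (-s) = s * (a ^ (-s) / s) := by field_simp
    _ ≤ s * ∑' k : ℕ, ((k:ℝ)+a) ^ (-(1+s)) := by
        exact mul_le_mul_of_nonneg_left this (le_of_lt hs)
  · filter_upwards [self_mem_nhdsWithin] with s hs
    have hs : 0 < s := hs
    have := (zkey a s ha hs).2.2
    calc s * ∑' k : ℕ, ((k:ℝ)+a) ^ (-(1+s)) ≤ s * (a ^ (-(1+s)) + a ^ (-s) / s) :=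
        mul_le_mul_of_nonneg_left this (le_of_lt hs)
    _ = a ^ (-s) + s * a ^ (-(1+s)) := by field_simp; ring



lemma rpow_step {x s : ℝ} (hx : 0 < x) : x * x ^ (-(2+s)) = x ^ (-(1+s)) := by
  nth_rewrite 1 [← Real.rpow_one x]
  rw [← Real.rpow_add hx]
  congr 1; ring

lemma geom_formula {r : ℝ} (hr : r ≠ 1) (m : ℕ) :
    ∑ l ∈ Finset.range m, r ^ l = (1 - r ^ m) / (1 - r) := by
  rw [geom_sum_eq hr]
  rw [show r - 1 = -(1 - r) by ring, div_neg, ← neg_div, neg_sub]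


lemma summable_k2_geom {r : ℝ} (hr0 : 0 ≤ r) (hr1 : r < 1) :
    Summable (fun k : ℕ => ((k:ℝ) + 2) * r ^ k) := by
  have h1 : Summable (fun k : ℕ => (k:ℝ) ^ 1 * r ^ k) :=
    summable_pow_mul_geometric_of_norm_lt_one 1
      (by rw [Real.norm_eq_abs, abs_of_nonneg hr0]; exact hr1)
  have h2 : Summable (fun k : ℕ => r ^ k) := summable_geometric_of_lt_one hr0 hr1
  exact (h1.add (h2.mul_left 2)).congr (fun k => by ring)

noncomputable def Bfun (r : ℝ) (k : ℕ) : ℝ :=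
  1/(1-r) * (((k:ℝ)+3/2) ^ (-2:ℝ) + ((k:ℝ)+1/2) ^ (-2:ℝ) + 9*((k:ℝ)+2)*r^k)

lemma Bfun_summable {r : ℝ} (hr0 : 0 < r) (hr1 : r < 1) : Summable (Bfun r) := by
  have h32 : Summable (fun k : ℕ => ((k:ℝ)+3/2) ^ (-2:ℝ)) :=
    ((zkey (3/2) 1 (by norm_num) one_pos).1).congr (fun k => by norm_num)
  have h12 : Summable (fun k : ℕ => ((k:ℝ)+1/2) ^ (-2:ℝ)) :=
    ((zkey (1/2) 1 (by norm_num) one_pos).1).congr (fun k => by norm_num)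
  have h3 : Summable (fun k : ℕ => 9*(((k:ℝ)+2)*r^k)) :=
    (summable_k2_geom hr0.le hr1).mul_left 9
  refine (Summable.mul_left (1/(1-r)) ((h32.add h12).add h3)).congr (fun k => ?_)
  unfold Bfun; ring

noncomputable def Xf (s : ℝ) (k : ℕ) : ℝ := ((k:ℝ)+3/2) ^ (-(2+s))
noncomputable def Yf (s : ℝ) (k : ℕ) : ℝ := ((k:ℝ)+1/2) ^ (-(2+s))
noncomputable def Ff (s : ℝ) (k : ℕ) : ℝ := ((k:ℝ)+3/2) ^ (-(1+s))
noncomputable def Gf (s : ℝ) (k : ℕ) : ℝ := ((k:ℝ)+1/2) ^ (-(1+s))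

section Facts
variable {r s : ℝ}

lemma xpos (k : ℕ) : (0:ℝ) < (k:ℝ)+3/2 := by positivity
lemma ypos (k : ℕ) : (0:ℝ) < (k:ℝ)+1/2 := by positivity
lemma knn (k : ℕ) : (0:ℝ) ≤ (k:ℝ) := Nat.cast_nonneg k

lemma Xnn (s : ℝ) (k : ℕ) : 0 ≤ Xf s k := Real.rpow_nonneg (xpos k).le _
lemma Ynn (s : ℝ) (k : ℕ) : 0 ≤ Yf s k := Real.rpow_nonneg (ypos k).le _
lemma FX (s : ℝ) (k : ℕ) : ((k:ℝ)+3/2) * Xf s k = Ff s k := rpow_step (xpos k)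
lemma GY (s : ℝ) (k : ℕ) : ((k:ℝ)+1/2) * Yf s k = Gf s k := rpow_step (ypos k)
lemma Xle1 (s : ℝ) (hs : 0 < s) (k : ℕ) : Xf s k ≤ 1 :=
  Real.rpow_le_one_of_one_le_of_nonpos (by linarith [knn k]) (by linarith)
lemma Yle (s : ℝ) (hs : 0 < s) (k : ℕ) : Yf s k ≤ (1/2:ℝ) ^ (-(2+s)) :=
  Real.rpow_le_rpow_of_nonpos (by norm_num) (by linarith [knn k]) (by linarith)

lemma summable_XY (hs : 0 < s) :
    Summable (Ff s) ∧ Summable (Gf s) ∧ Summable (Xf s) ∧ Summable (Yf s) := by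
  have hSF : Summable (Ff s) := (zkey (3/2) s (by norm_num) hs).1
  have hSG : Summable (Gf s) := (zkey (1/2) s (by norm_num) hs).1
  have hXF : ∀ k, Xf s k ≤ Ff s k := fun k =>
    Real.rpow_le_rpow_of_exponent_le (by linarith [knn k]) (by linarith)
  have hY2G : ∀ k, Yf s k ≤ 2 * Gf s k := fun k => by
    have h := GY s k
    nlinarith [Ynn s k, knn k]
  exact ⟨hSF, hSG, Summable.of_nonneg_of_le (Xnn s) hXF hSF,
    Summable.of_nonneg_of_le (Ynn s) hY2G (hSG.mul_left 2)⟩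

-- uniform bound for s ∈ (0,1]
lemma XY_uniform (hs : 0 < s) (hs1 : s ≤ 1) (k : ℕ) :
    Xf s k ≤ ((k:ℝ)+3/2) ^ (-2:ℝ) ∧ Yf s k ≤ 2 * ((k:ℝ)+1/2) ^ (-2:ℝ) ∧ Yf s k ≤ 8 := by
  have hX2 : Xf s k ≤ ((k:ℝ)+3/2) ^ (-2:ℝ) :=
    Real.rpow_le_rpow_of_exponent_le (by linarith [knn k]) (by linarith)
  have hsplit : Yf s k = ((k:ℝ)+1/2) ^ (-2:ℝ) * ((k:ℝ)+1/2) ^ (-s) := by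
    unfold Yf
    rw [← Real.rpow_add (ypos k)]; congr 1; ring
  have h2 : ((k:ℝ)+1/2) ^ (-s) ≤ (1/2:ℝ) ^ (-s) :=
    Real.rpow_le_rpow_of_nonpos (by norm_num) (by linarith [knn k]) (by linarith)
  have h3 : (1/2:ℝ) ^ (-s) ≤ 2 := by
    have he : (1/2:ℝ) ^ (-s) = (2:ℝ) ^ s := by
      rw [show (1/2:ℝ) = 2⁻¹ by norm_num, ← Real.rpow_neg_one (2:ℝ),
        ← Real.rpow_mul (by norm_num)]
      congr 1; ring
    rw [he]
    calc (2:ℝ) ^ s ≤ (2:ℝ) ^ (1:ℝ) := Real.rpow_le_rpow_of_exponent_le one_le_two hs1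
    _ = 2 := Real.rpow_one 2
  have hb : (0:ℝ) ≤ ((k:ℝ)+1/2) ^ (-2:ℝ) := Real.rpow_nonneg (ypos k).le _
  have hY2 : Yf s k ≤ 2 * ((k:ℝ)+1/2) ^ (-2:ℝ) := by
    calc Yf s k = ((k:ℝ)+1/2) ^ (-2:ℝ) * ((k:ℝ)+1/2) ^ (-s) := hsplit
    _ ≤ ((k:ℝ)+1/2) ^ (-2:ℝ) * 2 := mul_le_mul_of_nonneg_left (h2.trans h3) hb
    _ = 2 * ((k:ℝ)+1/2) ^ (-2:ℝ) := by ring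
  refine ⟨hX2, hY2, ?_⟩
  have h5 : ((k:ℝ)+1/2) ^ (-2:ℝ) ≤ ((1:ℝ)/2) ^ (-2:ℝ) :=
    Real.rpow_le_rpow_of_nonpos (by norm_num) (by linarith [knn k]) (by norm_num)
  have h4 : ((1:ℝ)/2) ^ (-2:ℝ) = 4 := by
    rw [show (-2:ℝ) = ((-2:ℤ):ℝ) by norm_num, Real.rpow_intCast]
    norm_num
  nlinarith [hY2]

set_option maxHeartbeats 1000000 in
lemma L_facts (hr0 : 0 < r) (hr1 : r < 1) (hs : 0 < s) :
    Summable (fun k : ℕ => ((k:ℝ)+1) *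
      ((∑ l ∈ Finset.range (k+2), r^l) * ((k:ℝ)+3/2) ^ (-(2+s))
        + (∑ l ∈ Finset.range k, r^l) * ((k:ℝ)+1/2) ^ (-(2+s)))) ∧
    ∃ E : ℝ,
      (∑' k : ℕ, ((k:ℝ)+1) *
        ((∑ l ∈ Finset.range (k+2), r^l) * ((k:ℝ)+3/2) ^ (-(2+s))
          + (∑ l ∈ Finset.range k, r^l) * ((k:ℝ)+1/2) ^ (-(2+s))))
        = 1/(1-r) * ((∑' k : ℕ, ((k:ℝ)+3/2) ^ (-(1+s))) + ∑' k : ℕ, ((k:ℝ)+1/2) ^ (-(1+s))) + E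
      ∧ (s ≤ 1 → |E| ≤ ∑' k, Bfun r k) := by
  have hne : (1:ℝ) - r ≠ 0 := by linarith
  have hinv : (0:ℝ) < 1/(1-r) := by
    rw [one_div]; exact inv_pos.2 (by linarith)
  obtain ⟨hSF, hSG, hSX, hSY⟩ := summable_XY (s := s) hs
  have hrpow : ∀ k : ℕ, r^(k+2) ≤ r^k := fun k =>
    pow_le_pow_of_le_one hr0.le hr1.le (by omega)
  have hrk : ∀ k : ℕ, (0:ℝ) ≤ r^k := fun k => by positivity
  set err : ℕ → ℝ := fun k =>
    1/(1-r) * ((1/2)*(Yf s k - Xf s k) - ((k:ℝ)+1)*(r^(k+2) * Xf s k + r^k * Yf s k)) with herrdef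
  set bnd : ℕ → ℝ := fun k =>
    1/(1-r) * ((1/2)*(Xf s k + Yf s k) + ((k:ℝ)+2)*r^k*(Xf s k + Yf s k)) with hbnddef
  have herrbnd : ∀ k, |err k| ≤ bnd k := by
    intro k
    rw [herrdef, hbnddef]
    simp only
    rw [abs_mul, abs_of_pos hinv]
    refine mul_le_mul_of_nonneg_left ?_ hinv.le
    rw [abs_le]
    have h1 := mul_nonneg (mul_nonneg (by linarith [knn k] : (0:ℝ) ≤ (k:ℝ)+1)
      (sub_nonneg.2 (hrpow k))) (Xnn s k)
    have h2 := mul_nonneg (mul_nonneg (by linarith [knn k] : (0:ℝ) ≤ (k:ℝ)+1) (hrk (k+2))) (Xnn s k)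
    have h3 := mul_nonneg (mul_nonneg (by linarith [knn k] : (0:ℝ) ≤ (k:ℝ)+1) (hrk k)) (Ynn s k)
    have h4 := mul_nonneg (hrk k) (Xnn s k)
    have h5 := mul_nonneg (hrk k) (Ynn s k)
    constructor
    · nlinarith [Xnn s k, Ynn s k]
    · nlinarith [Xnn s k, Ynn s k]
  have hc1 : (1:ℝ) ≤ (1/2:ℝ) ^ (-(2+s)) :=
    Real.one_le_rpow_of_pos_of_le_one_of_nonpos (by norm_num) (by norm_num) (by linarith)
  have hSbnd : Summable bnd := by
    have hW : Summable (fun k : ℕ => ((k:ℝ)+2)*r^k*(Xf s k + Yf s k)) := by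
      have hgeo : Summable (fun k : ℕ => (1+(1/2:ℝ) ^ (-(2+s)))*(((k:ℝ)+2)*r^k)) :=
        (summable_k2_geom hr0.le hr1).mul_left _
      refine Summable.of_nonneg_of_le (fun k => ?_) (fun k => ?_) hgeo
      · have := Xnn s k; have := Ynn s k; have := knn k
        positivity
      · have h1 : Xf s k + Yf s k ≤ 1 + (1/2:ℝ) ^ (-(2+s)) := add_le_add (Xle1 s hs k) (Yle s hs k)
        have h0 : (0:ℝ) ≤ ((k:ℝ)+2)*r^k := mul_nonneg (by linarith [knn k]) (hrk k)
        calc ((k:ℝ)+2)*r^k*(Xf s k + Yf s k) ≤ ((k:ℝ)+2)*r^k*(1+(1/2:ℝ) ^ (-(2+s))) :=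
              mul_le_mul_of_nonneg_left h1 h0
        _ = (1+(1/2:ℝ) ^ (-(2+s)))*(((k:ℝ)+2)*r^k) := by ring
    refine ((((hSX.add hSY).mul_left (1/2)).add hW).mul_left (1/(1-r))).congr (fun k => ?_)
    rw [hbnddef]
  have hSabs : Summable (fun k => |err k|) :=
    Summable.of_nonneg_of_le (fun k => abs_nonneg _) herrbnd hSbnd
  have hSerr : Summable err := hSabs.of_abs
  have hid : ∀ k : ℕ, ((k:ℝ)+1) *
      ((∑ l ∈ Finset.range (k+2), r^l) * ((k:ℝ)+3/2) ^ (-(2+s))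
        + (∑ l ∈ Finset.range k, r^l) * ((k:ℝ)+1/2) ^ (-(2+s)))
      = 1/(1-r) * (Ff s k + Gf s k) + err k := by
    intro k
    rw [geom_formula (by linarith) (k+2), geom_formula (by linarith) k, herrdef]
    simp only
    rw [← FX s k, ← GY s k]
    show ((k:ℝ)+1) * ((1 - r^(k+2))/(1-r) * Xf s k + (1 - r^k)/(1-r) * Yf s k) = _
    field_simp
    ring
  have hSmain : Summable (fun k => 1/(1-r) * (Ff s k + Gf s k)) := (hSF.add hSG).mul_left _
  refine ⟨(hSmain.add hSerr).congr (fun k => (hid k).symm), ∑' k, err k, ?_, ?_⟩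
  · rw [tsum_congr hid, Summable.tsum_add hSmain hSerr, tsum_mul_left, Summable.tsum_add hSF hSG]
    rfl
  · intro hs1
    have h1 : |∑' k, err k| ≤ ∑' k, |err k| :=
      norm_tsum_le_tsum_norm (f := err) hSabs
    refine h1.trans (Summable.tsum_le_tsum (fun k => ?_) hSabs (Bfun_summable hr0 hr1))
    refine (herrbnd k).trans ?_
    obtain ⟨hX2, hY2, hY8⟩ := XY_uniform hs hs1 k
    rw [hbnddef]
    have hXb : Xf s k ≤ 1 := Xle1 s hs k
    have hAnn : (0:ℝ) ≤ ((k:ℝ)+3/2) ^ (-2:ℝ) := Real.rpow_nonneg (xpos k).le _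
    have hBnn : (0:ℝ) ≤ ((k:ℝ)+1/2) ^ (-2:ℝ) := Real.rpow_nonneg (ypos k).le _
    have h0 : (0:ℝ) ≤ ((k:ℝ)+2)*r^k := mul_nonneg (by linarith [knn k]) (hrk k)
    have hB1 : ((k:ℝ)+2)*r^k*(Xf s k + Yf s k) ≤ ((k:ℝ)+2)*r^k*9 :=
      mul_le_mul_of_nonneg_left (by linarith [Xnn s k]) h0
    have hinner : (1/2)*(Xf s k + Yf s k) + ((k:ℝ)+2)*r^k*(Xf s k + Yf s k)
        ≤ ((k:ℝ)+3/2) ^ (-2:ℝ) + ((k:ℝ)+1/2) ^ (-2:ℝ) + 9*((k:ℝ)+2)*r^k := by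
      nlinarith [hX2, hY2, hB1]
    calc 1/(1-r) * ((1/2)*(Xf s k + Yf s k) + ((k:ℝ)+2)*r^k*(Xf s k + Yf s k))
        ≤ 1/(1-r) * (((k:ℝ)+3/2) ^ (-2:ℝ) + ((k:ℝ)+1/2) ^ (-2:ℝ) + 9*((k:ℝ)+2)*r^k) :=
          mul_le_mul_of_nonneg_left hinner hinv.le
    _ = Bfun r k := rfl

set_option maxHeartbeats 1000000 in
lemma M_facts (hr0 : 0 < r) (hr1 : r < 1) (hs : 0 < s) :
    Summable (fun k : ℕ => (∑ m ∈ Finset.range (k+1), r^m) *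
      (((k:ℝ)+2) * ((k:ℝ)+3/2) ^ (-(2+s)) + (k:ℝ) * ((k:ℝ)+1/2) ^ (-(2+s)))) ∧
    ∃ E : ℝ,
      (∑' k : ℕ, (∑ m ∈ Finset.range (k+1), r^m) *
        (((k:ℝ)+2) * ((k:ℝ)+3/2) ^ (-(2+s)) + (k:ℝ) * ((k:ℝ)+1/2) ^ (-(2+s))))
        = 1/(1-r) * ((∑' k : ℕ, ((k:ℝ)+3/2) ^ (-(1+s))) + ∑' k : ℕ, ((k:ℝ)+1/2) ^ (-(1+s))) + E
      ∧ (s ≤ 1 → |E| ≤ ∑' k, Bfun r k) := by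
  have hne : (1:ℝ) - r ≠ 0 := by linarith
  have hinv : (0:ℝ) < 1/(1-r) := by
    rw [one_div]; exact inv_pos.2 (by linarith)
  obtain ⟨hSF, hSG, hSX, hSY⟩ := summable_XY (s := s) hs
  have hrpow : ∀ k : ℕ, r^(k+1) ≤ r^k := fun k =>
    pow_le_pow_of_le_one hr0.le hr1.le (by omega)
  have hrk : ∀ k : ℕ, (0:ℝ) ≤ r^k := fun k => by positivity
  set err : ℕ → ℝ := fun k =>
    1/(1-r) * ((1/2)*(Xf s k - Yf s k) - r^(k+1)*(((k:ℝ)+2) * Xf s k + (k:ℝ) * Yf s k)) with herrdef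
  set bnd : ℕ → ℝ := fun k =>
    1/(1-r) * ((1/2)*(Xf s k + Yf s k) + ((k:ℝ)+2)*r^k*(Xf s k + Yf s k)) with hbnddef
  have herrbnd : ∀ k, |err k| ≤ bnd k := by
    intro k
    rw [herrdef, hbnddef]
    simp only
    rw [abs_mul, abs_of_pos hinv]
    refine mul_le_mul_of_nonneg_left ?_ hinv.le
    rw [abs_le]
    have h1 := mul_nonneg (mul_nonneg (by linarith [knn k] : (0:ℝ) ≤ (k:ℝ)+2)
      (sub_nonneg.2 (hrpow k))) (Xnn s k)
    have h1b := mul_nonneg (mul_nonneg (by linarith [knn k] : (0:ℝ) ≤ (k:ℝ))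
      (sub_nonneg.2 (hrpow k))) (Ynn s k)
    have h2 := mul_nonneg (mul_nonneg (by linarith [knn k] : (0:ℝ) ≤ (k:ℝ)+2) (hrk (k+1))) (Xnn s k)
    have h3 := mul_nonneg (mul_nonneg (by linarith [knn k] : (0:ℝ) ≤ (k:ℝ)) (hrk (k+1))) (Ynn s k)
    have h4 := mul_nonneg (hrk k) (Xnn s k)
    have h5 := mul_nonneg (hrk k) (Ynn s k)
    have h6 := mul_nonneg (mul_nonneg (by linarith [knn k] : (0:ℝ) ≤ (k:ℝ)) (hrk k)) (Ynn s k)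
    have h7 := mul_nonneg (mul_nonneg (by linarith [knn k] : (0:ℝ) ≤ (k:ℝ)) (hrk k)) (Xnn s k)
    constructor
    · nlinarith [Xnn s k, Ynn s k]
    · nlinarith [Xnn s k, Ynn s k]
  have hc1 : (1:ℝ) ≤ (1/2:ℝ) ^ (-(2+s)) :=
    Real.one_le_rpow_of_pos_of_le_one_of_nonpos (by norm_num) (by norm_num) (by linarith)
  have hSbnd : Summable bnd := by
    have hW : Summable (fun k : ℕ => ((k:ℝ)+2)*r^k*(Xf s k + Yf s k)) := by
      have hgeo : Summable (fun k : ℕ => (1+(1/2:ℝ) ^ (-(2+s)))*(((k:ℝ)+2)*r^k)) :=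
        (summable_k2_geom hr0.le hr1).mul_left _
      refine Summable.of_nonneg_of_le (fun k => ?_) (fun k => ?_) hgeo
      · have := Xnn s k; have := Ynn s k; have := knn k
        positivity
      · have h1 : Xf s k + Yf s k ≤ 1 + (1/2:ℝ) ^ (-(2+s)) := add_le_add (Xle1 s hs k) (Yle s hs k)
        have h0 : (0:ℝ) ≤ ((k:ℝ)+2)*r^k := mul_nonneg (by linarith [knn k]) (hrk k)
        calc ((k:ℝ)+2)*r^k*(Xf s k + Yf s k) ≤ ((k:ℝ)+2)*r^k*(1+(1/2:ℝ) ^ (-(2+s))) :=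
              mul_le_mul_of_nonneg_left h1 h0
        _ = (1+(1/2:ℝ) ^ (-(2+s)))*(((k:ℝ)+2)*r^k) := by ring
    refine ((((hSX.add hSY).mul_left (1/2)).add hW).mul_left (1/(1-r))).congr (fun k => ?_)
    rw [hbnddef]
  have hSabs : Summable (fun k => |err k|) :=
    Summable.of_nonneg_of_le (fun k => abs_nonneg _) herrbnd hSbnd
  have hSerr : Summable err := hSabs.of_abs
  have hid : ∀ k : ℕ, (∑ m ∈ Finset.range (k+1), r^m) *
      (((k:ℝ)+2) * ((k:ℝ)+3/2) ^ (-(2+s)) + (k:ℝ) * ((k:ℝ)+1/2) ^ (-(2+s)))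
      = 1/(1-r) * (Ff s k + Gf s k) + err k := by
    intro k
    rw [geom_formula (by linarith) (k+1), herrdef]
    simp only
    rw [← FX s k, ← GY s k]
    show (1 - r^(k+1))/(1-r) * (((k:ℝ)+2) * Xf s k + (k:ℝ) * Yf s k) = _
    field_simp
    ring
  have hSmain : Summable (fun k => 1/(1-r) * (Ff s k + Gf s k)) := (hSF.add hSG).mul_left _
  refine ⟨(hSmain.add hSerr).congr (fun k => (hid k).symm), ∑' k, err k, ?_, ?_⟩
  · rw [tsum_congr hid, Summable.tsum_add hSmain hSerr, tsum_mul_left, Summable.tsum_add hSF hSG]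
    rfl
  · intro hs1
    have h1 : |∑' k, err k| ≤ ∑' k, |err k| :=
      norm_tsum_le_tsum_norm (f := err) hSabs
    refine h1.trans (Summable.tsum_le_tsum (fun k => ?_) hSabs (Bfun_summable hr0 hr1))
    refine (herrbnd k).trans ?_
    obtain ⟨hX2, hY2, hY8⟩ := XY_uniform hs hs1 k
    rw [hbnddef]
    have hXb : Xf s k ≤ 1 := Xle1 s hs k
    have hAnn : (0:ℝ) ≤ ((k:ℝ)+3/2) ^ (-2:ℝ) := Real.rpow_nonneg (xpos k).le _
    have hBnn : (0:ℝ) ≤ ((k:ℝ)+1/2) ^ (-2:ℝ) := Real.rpow_nonneg (ypos k).le _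
    have h0 : (0:ℝ) ≤ ((k:ℝ)+2)*r^k := mul_nonneg (by linarith [knn k]) (hrk k)
    have hB1 : ((k:ℝ)+2)*r^k*(Xf s k + Yf s k) ≤ ((k:ℝ)+2)*r^k*9 :=
      mul_le_mul_of_nonneg_left (by linarith [Xnn s k]) h0
    have hinner : (1/2)*(Xf s k + Yf s k) + ((k:ℝ)+2)*r^k*(Xf s k + Yf s k)
        ≤ ((k:ℝ)+3/2) ^ (-2:ℝ) + ((k:ℝ)+1/2) ^ (-2:ℝ) + 9*((k:ℝ)+2)*r^k := by
      nlinarith [hX2, hY2, hB1]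
    calc 1/(1-r) * ((1/2)*(Xf s k + Yf s k) + ((k:ℝ)+2)*r^k*(Xf s k + Yf s k))
        ≤ 1/(1-r) * (((k:ℝ)+3/2) ^ (-2:ℝ) + ((k:ℝ)+1/2) ^ (-2:ℝ) + 9*((k:ℝ)+2)*r^k) :=
          mul_le_mul_of_nonneg_left hinner hinv.le
    _ = Bfun r k := rfl

end Facts



-- generic limit lemma
lemma limit_part (r : ℝ) (hr0 : 0 < r) (hr1 : r < 1) (T : ℝ → ℝ)
    (hT : ∀ s : ℝ, 0 < s → s ≤ 1 →
      |T s - 1/(1-r) * ((∑' k : ℕ, ((k:ℝ)+3/2) ^ (-(1+s))) + ∑' k : ℕ, ((k:ℝ)+1/2) ^ (-(1+s)))|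
        ≤ ∑' k, Bfun r k) :
    Filter.Tendsto (fun s : ℝ => s * T s) (nhdsWithin 0 (Set.Ioi 0)) (nhds (2 / (1 - r))) := by
  set main : ℝ → ℝ := fun s =>
    1/(1-r) * ((∑' k : ℕ, ((k:ℝ)+3/2) ^ (-(1+s))) + ∑' k : ℕ, ((k:ℝ)+1/2) ^ (-(1+s))) with hmaindef
  have h1 : Tendsto (fun s : ℝ => 1/(1-r) * (s * (∑' k : ℕ, ((k:ℝ)+3/2) ^ (-(1+s)))
      + s * ∑' k : ℕ, ((k:ℝ)+1/2) ^ (-(1+s)))) (nhdsWithin 0 (Set.Ioi 0))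
      (nhds (1/(1-r) * (1 + 1))) :=
    ((ztendsto (3/2) (by norm_num)).add (ztendsto (1/2) (by norm_num))).const_mul _
  have hEzero : Tendsto (fun s : ℝ => s * (T s - main s)) (nhdsWithin 0 (Set.Ioi 0)) (nhds 0) := by
    refine squeeze_zero_norm' (a := fun s : ℝ => s * ∑' k, Bfun r k) ?_ ?_
    · filter_upwards [Ioc_mem_nhdsGT_of_mem (by constructor <;> norm_num : (0:ℝ) ∈ Ico (0:ℝ) 1)]
        with s hs
      rw [Real.norm_eq_abs, abs_mul, abs_of_pos hs.1]
      exact mul_le_mul_of_nonneg_left (hT s hs.1 hs.2) hs.1.le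
    · have h0 : Tendsto (fun s : ℝ => s * ∑' k, Bfun r k) (nhds 0) (nhds (0 * ∑' k, Bfun r k)) :=
        (continuous_id.mul continuous_const).tendsto 0
      rw [zero_mul] at h0
      exact h0.mono_left nhdsWithin_le_nhds
  have hsum : Tendsto (fun s : ℝ => 1/(1-r) * (s * (∑' k : ℕ, ((k:ℝ)+3/2) ^ (-(1+s)))
      + s * ∑' k : ℕ, ((k:ℝ)+1/2) ^ (-(1+s))) + s * (T s - main s)) (nhdsWithin 0 (Set.Ioi 0))
      (nhds (1/(1-r) * (1 + 1) + 0)) := h1.add hEzero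
  have heq : (fun s : ℝ => 1/(1-r) * (s * (∑' k : ℕ, ((k:ℝ)+3/2) ^ (-(1+s)))
      + s * ∑' k : ℕ, ((k:ℝ)+1/2) ^ (-(1+s))) + s * (T s - main s)) = fun s => s * T s := by
    funext s
    rw [hmaindef]
    ring
  rw [heq] at hsum
  have hval : 1/(1-r) * (1 + 1) + 0 = 2 / (1-r) := by ring
  rwa [hval] at hsum

/-- for `0 < q < 1` and `n ≥ 1`, the series defining
`Tr(L_q^n |D|^(-2-s))` and `Tr(M_q^n |D|^(-2-s))` converge for every `s > 0`, and
`∮ L_q^n |D|⁻² = ∮ M_q^n |D|⁻² = 2/(1 - q^(2n))`, i.e.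
`s·T_L(s) → 2/(1-q^(2n))` and `s·T_M(s) → 2/(1-q^(2n))` as `s → 0⁺`. -/
theorem suq2_ncint_Lq_Mq (q : ℝ) (hq0 : 0 < q) (hq1 : q < 1) (n : ℕ) (hn : 1 ≤ n) :
    (∀ s : ℝ, 0 < s →
      Summable (fun k : ℕ => ((k : ℝ) + 1) *
        ((∑ l ∈ Finset.range (k + 2), q ^ (2 * n * l)) * ((k : ℝ) + 3 / 2) ^ (-(2 + s))
          + (∑ l ∈ Finset.range k, q ^ (2 * n * l)) * ((k : ℝ) + 1 / 2) ^ (-(2 + s)))) ∧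
      Summable (fun k : ℕ => (∑ m ∈ Finset.range (k + 1), q ^ (2 * n * m)) *
        (((k : ℝ) + 2) * ((k : ℝ) + 3 / 2) ^ (-(2 + s))
          + (k : ℝ) * ((k : ℝ) + 1 / 2) ^ (-(2 + s))))) ∧
    Filter.Tendsto (fun s : ℝ => s * traceLq q n s) (nhdsWithin 0 (Set.Ioi 0))
      (nhds (2 / (1 - q ^ (2 * n)))) ∧
    Filter.Tendsto (fun s : ℝ => s * traceMq q n s) (nhdsWithin 0 (Set.Ioi 0))
      (nhds (2 / (1 - q ^ (2 * n)))) := by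
  set r : ℝ := q ^ (2 * n) with hrdef
  have hr0 : 0 < r := pow_pos hq0 _
  have hr1 : r < 1 := pow_lt_one₀ hq0.le hq1 (by omega)
  have hpow : ∀ l : ℕ, q ^ (2 * n * l) = r ^ l := fun l => pow_mul q (2*n) l
  have hLconv : ∀ s : ℝ, (fun k : ℕ => ((k : ℝ) + 1) *
        ((∑ l ∈ Finset.range (k + 2), q ^ (2 * n * l)) * ((k : ℝ) + 3 / 2) ^ (-(2 + s))
          + (∑ l ∈ Finset.range k, q ^ (2 * n * l)) * ((k : ℝ) + 1 / 2) ^ (-(2 + s))))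
      = (fun k : ℕ => ((k:ℝ)+1) *
        ((∑ l ∈ Finset.range (k+2), r^l) * ((k:ℝ)+3/2) ^ (-(2+s))
          + (∑ l ∈ Finset.range k, r^l) * ((k:ℝ)+1/2) ^ (-(2+s)))) := by
    intro s; funext k; simp_rw [hpow]
  have hMconv : ∀ s : ℝ, (fun k : ℕ => (∑ m ∈ Finset.range (k + 1), q ^ (2 * n * m)) *
        (((k : ℝ) + 2) * ((k : ℝ) + 3 / 2) ^ (-(2 + s))
          + (k : ℝ) * ((k : ℝ) + 1 / 2) ^ (-(2 + s))))
      = (fun k : ℕ => (∑ m ∈ Finset.range (k+1), r^m) *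
        (((k:ℝ)+2) * ((k:ℝ)+3/2) ^ (-(2+s)) + (k:ℝ) * ((k:ℝ)+1/2) ^ (-(2+s)))) := by
    intro s; funext k; simp_rw [hpow]
  refine ⟨fun s hs => ⟨by rw [hLconv s]; exact (L_facts hr0 hr1 hs).1,
    by rw [hMconv s]; exact (M_facts hr0 hr1 hs).1⟩, ?_, ?_⟩
  · refine limit_part r hr0 hr1 _ (fun s hs hs1 => ?_)
    obtain ⟨_, E, hEeq, hEbd⟩ := L_facts (r := r) (s := s) hr0 hr1 hs
    have hT : traceLq q n s = 1/(1-r) * ((∑' k : ℕ, ((k:ℝ)+3/2) ^ (-(1+s)))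
        + ∑' k : ℕ, ((k:ℝ)+1/2) ^ (-(1+s))) + E := by
      rw [traceLq]
      rw [show (∑' k : ℕ, ((k : ℝ) + 1) *
        ((∑ l ∈ Finset.range (k + 2), q ^ (2 * n * l)) * ((k : ℝ) + 3 / 2) ^ (-(2 + s))
          + (∑ l ∈ Finset.range k, q ^ (2 * n * l)) * ((k : ℝ) + 1 / 2) ^ (-(2 + s))))
        = (∑' k : ℕ, ((k:ℝ)+1) *
        ((∑ l ∈ Finset.range (k+2), r^l) * ((k:ℝ)+3/2) ^ (-(2+s))
          + (∑ l ∈ Finset.range k, r^l) * ((k:ℝ)+1/2) ^ (-(2+s)))) from by rw [hLconv s]]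
      exact hEeq
    rw [hT]
    simpa using hEbd hs1
  · refine limit_part r hr0 hr1 _ (fun s hs hs1 => ?_)
    obtain ⟨_, E, hEeq, hEbd⟩ := M_facts (r := r) (s := s) hr0 hr1 hs
    have hT : traceMq q n s = 1/(1-r) * ((∑' k : ℕ, ((k:ℝ)+3/2) ^ (-(1+s)))
        + ∑' k : ℕ, ((k:ℝ)+1/2) ^ (-(1+s))) + E := by
      rw [traceMq]
      rw [show (∑' k : ℕ, (∑ m ∈ Finset.range (k + 1), q ^ (2 * n * m)) *
        (((k : ℝ) + 2) * ((k : ℝ) + 3 / 2) ^ (-(2 + s))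
          + (k : ℝ) * ((k : ℝ) + 1 / 2) ^ (-(2 + s))))
        = (∑' k : ℕ, (∑ m ∈ Finset.range (k+1), r^m) *
        (((k:ℝ)+2) * ((k:ℝ)+3/2) ^ (-(2+s)) + (k:ℝ) * ((k:ℝ)+1/2) ^ (-(2+s)))) from by rw [hMconv s]]
      exact hEeq
    rw [hT]
    simpa using hEbd hs1
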